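/- Let φ₁,…,φ_d : ℝ^d → ℝ ∪ {+∞} be proper l.s.c. convex functions satisfying ∑ⱼ φⱼ(xⱼ) ≥ det(x₁,…,x_d) for all (x₁,…,x_d), and let x = (x₁,…,x_d). Then ∑ⱼ φⱼ(xⱼ) = det(x₁,…,x_d) holds if and only if for every i, ∑_{j≠i} φⱼ(xⱼ) = φᵢ*((-1)^{i+1} ⋀_{j≠i} xⱼ) and (-1)^{i+1} ⋀_{j≠i} xⱼ ∈ ∂φᵢ(xᵢ). -/

import Mathlib

open scoped RealInnerProductSpace

noncomputable def detCols (d : ℕ) (x : Fin d → EuclideanSpace ℝ (Fin d)) : ℝ :=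
  Matrix.det (Matrix.of fun i j => x j i)

/-- The vector `(-1)^{i+1} ⋀_{j≠i} xⱼ`, characterized (by multilinearity of the
determinant) through `det(x₁,…,w,…,x_d) = ⟨w, signedCross d x i⟩` where `w` is put in
column `i`. -/
noncomputable def signedCross (d : ℕ) (x : Fin d → EuclideanSpace ℝ (Fin d)) (i : Fin d) :
    EuclideanSpace ℝ (Fin d) :=
  (WithLp.equiv 2 (Fin d → ℝ)).symm fun k =>
    detCols d (Function.update x i (EuclideanSpace.single k (1 : ℝ)))

/-- Legendre–Fenchel conjugate of an `ℝ ∪ {+∞}`-valued function. -/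
noncomputable def legendre (d : ℕ) (φ : EuclideanSpace ℝ (Fin d) → EReal)
    (y : EuclideanSpace ℝ (Fin d)) : EReal :=
  ⨆ x : EuclideanSpace ℝ (Fin d), ((⟪x, y⟫ : ℝ) : EReal) - φ x

/-- `v ∈ ∂φ(x)` for an extended-real-valued convex function. -/
def InSubdiff (d : ℕ) (φ : EuclideanSpace ℝ (Fin d) → EReal)
    (x v : EuclideanSpace ℝ (Fin d)) : Prop :=
  ∀ y, φ x + ((⟪y - x, v⟫ : ℝ) : EReal) ≤ φ y

lemma detCols_eq_alt (d : ℕ) (y : Fin d → EuclideanSpace ℝ (Fin d)) :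
    detCols d y = Matrix.detRowAlternating (fun j => (WithLp.equiv 2 (Fin d → ℝ) (y j))) := by
  rw [detCols, ← Matrix.det_transpose]; rfl

lemma detCols_update_eq_inner (d : ℕ) (x : Fin d → EuclideanSpace ℝ (Fin d)) (i : Fin d)
    (w : EuclideanSpace ℝ (Fin d)) :
    detCols d (Function.update x i w) = ⟪w, signedCross d x i⟫ := by
  have h1 : ∀ u : EuclideanSpace ℝ (Fin d),
      (fun j => WithLp.equiv 2 (Fin d → ℝ) (Function.update x i u j))
        = Function.update (fun j => WithLp.equiv 2 (Fin d → ℝ) (x j)) i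
            (WithLp.equiv 2 (Fin d → ℝ) u) := by
    intro u
    funext j
    by_cases hj : j = i
    · subst hj; simp
    · simp [Function.update_of_ne hj]
  have hw : (WithLp.equiv 2 (Fin d → ℝ) w)
      = ∑ k, (w k : ℝ) • (Pi.single k (1 : ℝ) : Fin d → ℝ) := by
    funext k
    simp [Finset.sum_apply, Pi.single_apply]
  rw [detCols_eq_alt, h1, hw, AlternatingMap.map_update_sum]
  have h2 : ∀ k, Matrix.detRowAlternating
        (Function.update (fun j => WithLp.equiv 2 (Fin d → ℝ) (x j)) i
          ((w k : ℝ) • (Pi.single k (1:ℝ) : Fin d → ℝ)))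
      = w k * detCols d (Function.update x i (EuclideanSpace.single k (1:ℝ))) := by
    intro k
    rw [AlternatingMap.map_update_smul, detCols_eq_alt, h1]
    rfl
  rw [Finset.sum_congr rfl fun k _ => h2 k]
  simp [PiLp.inner_apply, RCLike.inner_apply, signedCross]
  exact Finset.sum_congr rfl fun _ _ => mul_comm _ _

lemma detCols_self_eq_inner (d : ℕ) (x : Fin d → EuclideanSpace ℝ (Fin d)) (i : Fin d) :
    detCols d x = ⟪x i, signedCross d x i⟫ := by
  conv_lhs => rw [← Function.update_eq_self i x]
  exact detCols_update_eq_inner d x i (x i)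

lemma ereal_sum_ne_bot {α : Type*} [DecidableEq α] {s : Finset α} {f : α → EReal}
    (h : ∀ j ∈ s, f j ≠ ⊥) : ∑ j ∈ s, f j ≠ ⊥ := by
  induction s using Finset.induction_on with
  | empty => simp
  | insert a t hk ih =>
    rw [Finset.sum_insert hk]
    simp only [ne_eq, EReal.add_eq_bot_iff, not_or]
    exact ⟨h a (Finset.mem_insert_self a t),
      ih fun j hj => h j (Finset.mem_insert_of_mem hj)⟩

lemma ereal_sum_eq_top {α : Type*} [DecidableEq α] {s : Finset α} {f : α → EReal} {j : α} (hj : j ∈ s)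
    (hbot : ∀ k ∈ s, f k ≠ ⊥) (htop : f j = ⊤) : ∑ k ∈ s, f k = ⊤ := by
  rw [← Finset.add_sum_erase _ _ hj, htop]
  exact EReal.top_add_of_ne_bot
    (ereal_sum_ne_bot fun k hk => hbot k (Finset.mem_of_mem_erase hk))

lemma ereal_coe_sum {α : Type*} [DecidableEq α] (s : Finset α) (f : α → ℝ) :
    ((∑ j ∈ s, f j : ℝ) : EReal) = ∑ j ∈ s, ((f j : ℝ) : EReal) := by
  induction s using Finset.induction_on with
  | empty => simp
  | insert a t hk ih => rw [Finset.sum_insert hk, Finset.sum_insert hk,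
      EReal.coe_add, ih]

theorem extremality_characterization (d : ℕ)
    (φ : Fin d → EuclideanSpace ℝ (Fin d) → EReal)
    (hlsc : ∀ i, LowerSemicontinuous (φ i))
    (hproper_bot : ∀ i x, φ i x ≠ ⊥)
    (hproper_top : ∀ i, ∃ x, φ i x ≠ ⊤)
    (hconv : ∀ i, ∀ a b : EuclideanSpace ℝ (Fin d), ∀ t : ℝ, 0 ≤ t → t ≤ 1 →
      φ i (t • a + (1 - t) • b) ≤ ((t : ℝ) : EReal) * φ i a + (((1 - t : ℝ)) : EReal) * φ i b)
    (hcon : ∀ y : Fin d → EuclideanSpace ℝ (Fin d),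
      ((detCols d y : ℝ) : EReal) ≤ ∑ j, φ j (y j))
    (x : Fin d → EuclideanSpace ℝ (Fin d)) :
    (∑ j, φ j (x j) = ((detCols d x : ℝ) : EReal)) ↔
      (∀ i : Fin d,
        (∑ j ∈ Finset.univ.erase i, φ j (x j) = legendre d (φ i) (signedCross d x i)) ∧
        InSubdiff d (φ i) (x i) (signedCross d x i)) := by
  by_cases hd : d = 0
  · subst hd
    exact absurd (hcon x) (by
      simp only [detCols, Matrix.det_isEmpty, Finset.univ_eq_empty, Finset.sum_empty]
      exact not_le.mpr (by exact_mod_cast (zero_lt_one (α := EReal))))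
  -- split of sums along updates
  have hsplit : ∀ (i : Fin d) (y : EuclideanSpace ℝ (Fin d)),
      ∑ j, φ j (Function.update x i y j)
        = φ i y + ∑ j ∈ Finset.univ.erase i, φ j (x j) := by
    intro i y
    rw [← Finset.add_sum_erase _ _ (Finset.mem_univ i), Function.update_self]
    congr 1
    refine Finset.sum_congr rfl fun j hj => ?_
    rw [Function.update_of_ne (Finset.ne_of_mem_erase hj)]
  have hcon' : ∀ (i : Fin d) (y : EuclideanSpace ℝ (Fin d)),
      ((⟪y, signedCross d x i⟫ : ℝ) : EReal)
        ≤ φ i y + ∑ j ∈ Finset.univ.erase i, φ j (x j) := by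
    intro i y
    have := hcon (Function.update x i y)
    rwa [detCols_update_eq_inner, hsplit] at this
  constructor
  · intro hS i
    set v := signedCross d x i with hv
    have hne_top : ∀ j, φ j (x j) ≠ ⊤ := by
      intro j h
      have := ereal_sum_eq_top (Finset.mem_univ j) (fun k _ => hproper_bot k (x k)) h
      rw [this] at hS
      exact (EReal.coe_ne_top _) hS.symm
    set a : Fin d → ℝ := fun j => (φ j (x j)).toReal with hadef
    have ha : ∀ j, φ j (x j) = ((a j : ℝ) : EReal) :=
      fun j => (EReal.coe_toReal (hne_top j) (hproper_bot j (x j))).symm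
    have hsum : (∑ j, φ j (x j)) = ((∑ j, a j : ℝ) : EReal) := by
      rw [ereal_coe_sum]; exact Finset.sum_congr rfl fun j _ => ha j
    have hdetr : ∑ j, a j = detCols d x := by
      rw [hsum] at hS; exact_mod_cast hS
    set A : ℝ := ∑ j ∈ Finset.univ.erase i, a j with hA
    have hsA : (∑ j ∈ Finset.univ.erase i, φ j (x j)) = ((A : ℝ) : EReal) := by
      rw [hA, ereal_coe_sum]; exact Finset.sum_congr rfl fun j _ => ha j
    have hAdet : A + a i = detCols d x := by
      rw [← hdetr, hA, ← Finset.add_sum_erase _ _ (Finset.mem_univ i)]; ring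
    constructor
    · rw [hsA]
      refine le_antisymm ?_ ?_
      · refine le_iSup_of_le (x i) ?_
        rw [ha i, ← EReal.coe_sub, ← detCols_self_eq_inner]
        exact le_of_eq (by norm_cast; linarith)
      · refine iSup_le fun y => ?_
        by_cases hy : φ i y = ⊤
        · rw [hy, EReal.sub_top]; exact bot_le
        · have hb : φ i y = (((φ i y).toReal : ℝ) : EReal) :=
            (EReal.coe_toReal hy (hproper_bot i y)).symm
          have h1 := hcon' i y
          rw [hsA, hb, ← EReal.coe_add] at h1
          rw [hb, ← EReal.coe_sub]
          have h1' : (⟪y, v⟫ : ℝ) ≤ (φ i y).toReal + A := by exact_mod_cast h1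
          exact_mod_cast (by linarith : (⟪y, v⟫ : ℝ) - (φ i y).toReal ≤ A)
    · intro y
      by_cases hy : φ i y = ⊤
      · rw [hy]; exact le_top
      · have hb : φ i y = (((φ i y).toReal : ℝ) : EReal) :=
          (EReal.coe_toReal hy (hproper_bot i y)).symm
        have h1 := hcon' i y
        rw [hsA, hb, ← EReal.coe_add] at h1
        have h1' : (⟪y, v⟫ : ℝ) ≤ (φ i y).toReal + A := by exact_mod_cast h1
        have hx : (⟪x i, v⟫ : ℝ) = A + a i := by
          rw [← detCols_self_eq_inner]; linarith
        rw [ha i, ← EReal.coe_add, hb]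
        have : a i + ⟪y - x i, v⟫ ≤ (φ i y).toReal := by
          rw [inner_sub_left, hx]; linarith
        exact_mod_cast this
  · intro H
    have i₀ : Fin d := ⟨0, Nat.pos_of_ne_zero hd⟩
    obtain ⟨hleg, hsub⟩ := H i₀
    set v := signedCross d x i₀ with hv
    have hx_top : φ i₀ (x i₀) ≠ ⊤ := by
      intro h
      obtain ⟨z, hz⟩ := hproper_top i₀
      apply hz
      have := hsub z
      rw [h, EReal.top_add_of_ne_bot (EReal.coe_ne_bot _)] at this
      exact top_le_iff.mp this
    set a : ℝ := (φ i₀ (x i₀)).toReal with hadef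
    have ha : φ i₀ (x i₀) = ((a : ℝ) : EReal) :=
      (EReal.coe_toReal hx_top (hproper_bot i₀ (x i₀))).symm
    have hle : legendre d (φ i₀) v ≤ (((⟪x i₀, v⟫ : ℝ) - a : ℝ) : EReal) := by
      refine iSup_le fun y => ?_
      by_cases hy : φ i₀ y = ⊤
      · rw [hy, EReal.sub_top]; exact bot_le
      · have hb : φ i₀ y = (((φ i₀ y).toReal : ℝ) : EReal) :=
          (EReal.coe_toReal hy (hproper_bot i₀ y)).symm
        have h1 := hsub y
        rw [ha, hb, ← EReal.coe_add] at h1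
        have h1' : a + ⟪y - x i₀, v⟫ ≤ (φ i₀ y).toReal := by exact_mod_cast h1
        rw [inner_sub_left] at h1'
        rw [hb, ← EReal.coe_sub]
        exact_mod_cast (by linarith : (⟪y, v⟫ : ℝ) - (φ i₀ y).toReal ≤ ⟪x i₀, v⟫ - a)
    refine le_antisymm ?_ (hcon x)
    rw [← Finset.add_sum_erase _ _ (Finset.mem_univ i₀), hleg]
    calc φ i₀ (x i₀) + legendre d (φ i₀) v
        ≤ φ i₀ (x i₀) + (((⟪x i₀, v⟫ : ℝ) - a : ℝ) : EReal) := add_le_add_right hle _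
      _ = ((detCols d x : ℝ) : EReal) := by
          rw [ha, ← EReal.coe_add, detCols_self_eq_inner d x i₀]
          norm_cast
          ring
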